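/- Let f = Σ_{r=0}^{s} c_r t^r ∈ ℤ[t] with c_0 and c_s invertible (i.e. ±1), and let Q be a medial quandle in which α^{f(L)} = 1 for all α ∈ Dis(Q), generated by X ⊆ Q with fixed z ∈ X. Then Dis(Q) is generated as a group by {(L_x L_z^{-1})^{L^r} : x ∈ X∖{z}, 0 ≤ r < s}. -/

import Mathlib

section ZC
variable {G : Type*} [Group G]

private def zc (W : G) (n : ℤ) (g : G) : G := W ^ n * g * (W ^ n)⁻¹

private lemma zc_mul (W : G) (n : ℤ) (g h : G) :
    zc W n (g * h) = zc W n g * zc W n h := by unfold zc; group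

private lemma zc_inv (W : G) (n : ℤ) (g : G) :
    zc W n g⁻¹ = (zc W n g)⁻¹ := by unfold zc; group

private lemma zc_one (W : G) (n : ℤ) : zc W n (1 : G) = 1 := by unfold zc; group

private lemma zc_zc (W : G) (m n : ℤ) (g : G) :
    zc W m (zc W n g) = zc W (m + n) g := by unfold zc; group

private lemma zc_zero (W : G) (g : G) : zc W 0 g = g := by unfold zc; group

private lemma zc_zpow (W : G) (n k : ℤ) (g : G) :
    zc W n (g ^ k) = (zc W n g) ^ k := by
  simpa [zc, MulAut.conj_apply] using map_zpow (MulAut.conj (W ^ n)) g k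

private lemma iter_conj (W : G) (r : ℕ) (g : G) :
    (fun α => W * α * W⁻¹)^[r] g = zc W (r : ℤ) g := by
  induction r with
  | zero => simp [zc_zero]
  | succ n ih =>
    rw [Function.iterate_succ_apply', ih]
    unfold zc
    have : ((n + 1 : ℕ) : ℤ) = (n : ℤ) + 1 := by push_cast; ring
    rw [this]
    group

end ZC

section QuandleAux
variable {Q : Type*} (op : Q → Q → Q) (L : Q → Equiv.Perm Q)
  (hL : ∀ x y, L x y = op x y)
  (hldist : ∀ x y w, op x (op y w) = op (op x y) (op x w))
  (hmed : ∀ x y u v, op (op x y) (op u v) = op (op x u) (op y v))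

include hL hldist in
private lemma aux_Lmul (a b : Q) : L a * L b = L (op a b) * L a := by
  ext y
  simp only [Equiv.Perm.mul_apply]
  rw [hL, hL, hL, hL]
  exact hldist a b y

include hL hldist in
private lemma aux_conj (a b : Q) : L a * L b * (L a)⁻¹ = L (op a b) := by
  rw [aux_Lmul op L hL hldist, mul_inv_cancel_right]

include hL hldist hmed in
private lemma aux_key (x y u : Q) : L y * (L x)⁻¹ * L u = L u * (L x)⁻¹ * L y := by
  have H : L (op x y) * L u = L (op x u) * L y := by
    ext v
    simp only [Equiv.Perm.mul_apply]
    rw [hL, hL, hL, hL]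
    exact hmed x y u v
  rw [← aux_conj op L hL hldist x y, ← aux_conj op L hL hldist x u] at H
  have h2 := congrArg (fun g => (L x)⁻¹ * g) H
  simpa [mul_assoc] using h2

include hL hldist hmed in
private lemma aux_comm (a b c d : Q) :
    (L a * (L b)⁻¹) * (L c * (L d)⁻¹) = (L c * (L d)⁻¹) * (L a * (L b)⁻¹) := by
  have K1 := aux_key op L hL hldist hmed b a c
  have K2 := aux_key op L hL hldist hmed a b d
  have K2' : (L b)⁻¹ * L a * (L d)⁻¹ = (L d)⁻¹ * L a * (L b)⁻¹ := by
    have h := congrArg Inv.inv K2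
    simp only [mul_inv_rev, inv_inv, ← mul_assoc] at h
    exact h.symm
  calc L a * (L b)⁻¹ * (L c * (L d)⁻¹)
      = (L a * (L b)⁻¹ * L c) * (L d)⁻¹ := by group
    _ = (L c * (L b)⁻¹ * L a) * (L d)⁻¹ := by rw [K1]
    _ = L c * ((L b)⁻¹ * L a * (L d)⁻¹) := by group
    _ = L c * ((L d)⁻¹ * L a * (L b)⁻¹) := by rw [K2']
    _ = L c * (L d)⁻¹ * (L a * (L b)⁻¹) := by group

end QuandleAux
theorem displacement_generators_of_f_quandle {Q : Type*} (op : Q → Q → Q)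
    (L : Q → Equiv.Perm Q) (hL : ∀ x y, L x y = op x y)
    (hidem : ∀ x, op x x = x)
    (hldist : ∀ x y w, op x (op y w) = op (op x y) (op x w))
    (hmed : ∀ x y u v, op (op x y) (op u v) = op (op x u) (op y v))
    (X : Set Q) (z : Q) (hz : z ∈ X)
    (hgen : ∀ S : Set Q, X ⊆ S →
      (∀ a b, a ∈ S → b ∈ S → op a b ∈ S ∧ (L a)⁻¹ b ∈ S) → ∀ q, q ∈ S)
    (w : Q) (s : ℕ) (hs : 1 ≤ s) (c : ℕ → ℤ)
    (hc0 : c 0 = 1 ∨ c 0 = -1) (hcs : c s = 1 ∨ c s = -1)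
    (hf : ∀ g ∈ Subgroup.closure {h : Equiv.Perm Q | ∃ u v : Q, h = L u * (L v)⁻¹},
      ((List.range (s + 1)).map
        (fun r => ((fun α : Equiv.Perm Q => L w * α * (L w)⁻¹)^[r] g) ^ (c r))).prod = 1) :
    Subgroup.closure {h : Equiv.Perm Q | ∃ u v : Q, h = L u * (L v)⁻¹} =
      Subgroup.closure {h : Equiv.Perm Q | ∃ x ∈ X, x ≠ z ∧ ∃ r < s,
        h = (fun α : Equiv.Perm Q => L w * α * (L w)⁻¹)^[r] (L x * (L z)⁻¹)} := by
  set D := Subgroup.closure {h : Equiv.Perm Q | ∃ u v : Q, h = L u * (L v)⁻¹} with hD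
  set E := Subgroup.closure {h : Equiv.Perm Q | ∃ x ∈ X, x ≠ z ∧ ∃ r < s,
      h = (fun α : Equiv.Perm Q => L w * α * (L w)⁻¹)^[r] (L x * (L z)⁻¹)} with hE
  -- basic membership
  have hgenD : ∀ u v : Q, L u * (L v)⁻¹ ∈ D := fun u v =>
    Subgroup.subset_closure ⟨u, v, rfl⟩
  -- D is abelian
  have habel : ∀ g ∈ D, ∀ h' ∈ D, Commute g h' := by
    intro g hg h' hh'
    refine Subgroup.closure_induction₂ (fun x y hx hy => ?_)
      (fun x _ => Commute.one_left x) (fun x _ => Commute.one_right x)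
      (fun x y z' _ _ _ h1 h2 => h1.mul_left h2)
      (fun y z' x _ _ _ h1 h2 => h1.mul_right h2)
      (fun x y _ _ h => h.inv_left) (fun x y _ _ h => h.inv_right) hg hh'
    obtain ⟨u, v, rfl⟩ := hx
    obtain ⟨u', v', rfl⟩ := hy
    exact aux_comm op L hL hldist hmed u v u' v'
  -- conjugation of generators
  have conj_gen : ∀ u v : Q, zc (L w) 1 (L u * (L v)⁻¹) = L (op w u) * (L (op w v))⁻¹ := by
    intro u v
    rw [← aux_conj op L hL hldist w u, ← aux_conj op L hL hldist w v]
    unfold zc; group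
  have hLinv : ∀ u : Q, L ((L w)⁻¹ u) = (L w)⁻¹ * L u * L w := by
    intro u
    have h := aux_conj op L hL hldist w ((L w)⁻¹ u)
    rw [← hL, show (L w) ((L w)⁻¹ u) = u from Equiv.apply_symm_apply _ _] at h
    rw [← h]; group
  have conj_gen_inv : ∀ u v : Q,
      zc (L w) (-1) (L u * (L v)⁻¹) = L ((L w)⁻¹ u) * (L ((L w)⁻¹ v))⁻¹ := by
    intro u v
    rw [hLinv, hLinv]
    unfold zc; group
  -- D is stable under zc
  have hζ1 : ∀ g ∈ D, zc (L w) 1 g ∈ D := by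
    intro g hg
    induction hg using Subgroup.closure_induction with
    | mem x hx =>
      obtain ⟨u, v, rfl⟩ := hx
      rw [conj_gen]
      exact hgenD _ _
    | one => rw [zc_one]; exact one_mem D
    | mul x y _ _ h1 h2 => rw [zc_mul]; exact mul_mem h1 h2
    | inv x _ h1 => rw [zc_inv]; exact inv_mem h1
  have hζn1 : ∀ g ∈ D, zc (L w) (-1) g ∈ D := by
    intro g hg
    induction hg using Subgroup.closure_induction with
    | mem x hx =>
      obtain ⟨u, v, rfl⟩ := hx
      rw [conj_gen_inv]
      exact hgenD _ _
    | one => rw [zc_one]; exact one_mem D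
    | mul x y _ _ h1 h2 => rw [zc_mul]; exact mul_mem h1 h2
    | inv x _ h1 => rw [zc_inv]; exact inv_mem h1
  have hDstable : ∀ n : ℤ, ∀ g ∈ D, zc (L w) n g ∈ D := by
    intro n
    induction n using Int.induction_on with
    | zero => intro g hg; rwa [zc_zero]
    | succ k ih =>
      intro g hg
      have h1 := hζ1 _ (ih g hg)
      rw [zc_zc] at h1
      have : (1 : ℤ) + k = (k : ℤ) + 1 := by ring
      rwa [this] at h1
    | pred k ih =>
      intro g hg
      have h1 := hζn1 _ (ih g hg)
      rw [zc_zc] at h1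
      have : (-1 : ℤ) + (-(k : ℤ)) = -(k : ℤ) - 1 := by ring
      rwa [this] at h1
  -- conjugation by any L a agrees with zc 1 on D
  have hindep : ∀ a : Q, ∀ g ∈ D, L a * g * (L a)⁻¹ = zc (L w) 1 g := by
    intro a g hg
    have hcomm := (habel _ (hgenD a w) _ (hDstable 1 g hg)).eq
    have hz1 : zc (L w) 1 g = L w * g * (L w)⁻¹ := by unfold zc; group
    rw [hz1] at hcomm ⊢
    calc L a * g * (L a)⁻¹
        = (L a * (L w)⁻¹) * (L w * g * (L w)⁻¹) * (L a * (L w)⁻¹)⁻¹ := by group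
      _ = (L w * g * (L w)⁻¹) * (L a * (L w)⁻¹) * (L a * (L w)⁻¹)⁻¹ := by rw [hcomm]
      _ = L w * g * (L w)⁻¹ := by group
  -- the fundamental recursion for e(a ▷ b)
  have he : ∀ a b : Q, L (op a b) * (L z)⁻¹ =
      zc (L w) 1 (L b * (L z)⁻¹) * (zc (L w) 1 (L a * (L z)⁻¹))⁻¹ * (L a * (L z)⁻¹) := by
    intro a b
    rw [← hindep a _ (hgenD b z), ← hindep a _ (hgenD a z),
      ← aux_conj op L hL hldist a b]
    group
  -- E ≤ D
  have hED : E ≤ D := by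
    rw [hE]
    refine (Subgroup.closure_le _).mpr ?_
    rintro h ⟨x, hx, hxz, r, hr, rfl⟩
    rw [iter_conj]
    exact hDstable r _ (hgenD x z)
  -- the set S
  set S : Set Q := {q | ∀ n : ℤ, zc (L w) n (L q * (L z)⁻¹) ∈ E} with hS
  have hzS : z ∈ S := by
    intro n
    have h1 : L z * (L z)⁻¹ = 1 := by group
    rw [h1, zc_one]
    exact one_mem E
  have hXS : X ⊆ S := by
    intro x hx
    by_cases hxz : x = z
    · rw [hxz]; exact hzS
    · have hbase : ∀ r : ℕ, r < s → zc (L w) (r : ℤ) (L x * (L z)⁻¹) ∈ E := by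
        intro r hr
        exact Subgroup.subset_closure ⟨x, hx, hxz, r, hr, (iter_conj (L w) r _).symm⟩
      have hpos : ∀ m : ℕ, zc (L w) (m : ℤ) (L x * (L z)⁻¹) ∈ E := by
        intro m
        induction m using Nat.strong_induction_on with
        | _ m ih =>
          by_cases hm : m < s
          · exact hbase m hm
          · obtain ⟨k, rfl⟩ : ∃ k, m = k + s := ⟨m - s, by omega⟩
            have hg : zc (L w) (k : ℤ) (L x * (L z)⁻¹) ∈ D := hDstable _ _ (hgenD x z)
            have hprod := hf _ hg
            rw [List.range_succ, List.map_append, List.prod_append] at hprod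
            simp only [List.map_cons, List.map_nil, List.prod_cons, List.prod_nil,
              mul_one] at hprod
            set A := ((List.range s).map (fun r =>
              ((fun α : Equiv.Perm Q => L w * α * (L w)⁻¹)^[r]
                (zc (L w) (k : ℤ) (L x * (L z)⁻¹))) ^ (c r))).prod with hA
            have hAmem : A ∈ E := by
              rw [hA]
              refine list_prod_mem ?_
              intro g' hg'
              simp only [List.mem_map, List.mem_range] at hg'
              obtain ⟨r, hr, rfl⟩ := hg'
              rw [iter_conj, zc_zc]
              have hcast : (r : ℤ) + (k : ℤ) = ((r + k : ℕ) : ℤ) := by push_cast; ring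
              rw [hcast]
              exact Subgroup.zpow_mem E (ih (r + k) (by omega)) _
            have hB : ((fun α : Equiv.Perm Q => L w * α * (L w)⁻¹)^[s]
                (zc (L w) (k : ℤ) (L x * (L z)⁻¹))) ^ (c s) = A⁻¹ := by
              have h2 := congrArg (fun t => A⁻¹ * t) hprod
              simpa [mul_assoc, ← hA] using h2
            have hBmem : ((fun α : Equiv.Perm Q => L w * α * (L w)⁻¹)^[s]
                (zc (L w) (k : ℤ) (L x * (L z)⁻¹))) ^ (c s) ∈ E := by
              rw [hB]; exact inv_mem hAmem
            rw [iter_conj, zc_zc] at hBmem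
            have hcast : (s : ℤ) + (k : ℤ) = ((k + s : ℕ) : ℤ) := by push_cast; ring
            rw [hcast] at hBmem
            rcases hcs with h | h
            · rwa [h, zpow_one] at hBmem
            · rw [h, zpow_neg_one] at hBmem
              exact (inv_mem_iff).mp hBmem
      intro n
      have main : ∀ m : ℕ, ∀ n : ℤ, -(m : ℤ) ≤ n → zc (L w) n (L x * (L z)⁻¹) ∈ E := by
        intro m
        induction m with
        | zero =>
          intro n hn
          have h1 : n = ((n.toNat : ℕ) : ℤ) := by omega
          rw [h1]
          exact hpos n.toNat
        | succ m ih =>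
          intro n hn
          by_cases h : -(m : ℤ) ≤ n
          · exact ih n h
          · have hn' : n = -((m : ℤ) + 1) := by omega
            rw [hn']
            have hg : zc (L w) (-((m : ℤ) + 1)) (L x * (L z)⁻¹) ∈ D :=
              hDstable _ _ (hgenD x z)
            have hprod := hf _ hg
            rw [List.range_succ_eq_map, List.map_cons, List.prod_cons, List.map_map] at hprod
            set A := ((List.range s).map ((fun r =>
              ((fun α : Equiv.Perm Q => L w * α * (L w)⁻¹)^[r]
                (zc (L w) (-((m : ℤ) + 1)) (L x * (L z)⁻¹))) ^ (c r)) ∘ Nat.succ)).prod with hA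
            have hAmem : A ∈ E := by
              rw [hA]
              refine list_prod_mem ?_
              intro g' hg'
              simp only [List.mem_map, List.mem_range, Function.comp] at hg'
              obtain ⟨r, hr, rfl⟩ := hg'
              rw [iter_conj, zc_zc]
              have hcast : ((Nat.succ r : ℕ) : ℤ) + (-((m : ℤ) + 1)) = (r : ℤ) - (m : ℤ) := by
                push_cast; ring
              rw [hcast]
              exact Subgroup.zpow_mem E (ih _ (by omega)) _
            have hC : ((fun α : Equiv.Perm Q => L w * α * (L w)⁻¹)^[0]
                (zc (L w) (-((m : ℤ) + 1)) (L x * (L z)⁻¹))) ^ (c 0) = A⁻¹ := by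
              have h2 := congrArg (fun t => t * A⁻¹) hprod
              simpa [mul_assoc, ← hA] using h2
            simp only [Function.iterate_zero, id_eq] at hC
            have hCmem : (zc (L w) (-((m : ℤ) + 1)) (L x * (L z)⁻¹)) ^ (c 0) ∈ E := by
              rw [hC]; exact inv_mem hAmem
            rcases hc0 with h0 | h0
            · rwa [h0, zpow_one] at hCmem
            · rw [h0, zpow_neg_one] at hCmem
              exact (inv_mem_iff).mp hCmem
      exact main n.natAbs n (by omega)
  -- S is closed under the quandle operations
  have hSclosed : ∀ a b : Q, a ∈ S → b ∈ S → op a b ∈ S ∧ (L a)⁻¹ b ∈ S := by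
    intro a b ha hb
    constructor
    · intro n
      rw [he a b, zc_mul, zc_mul, zc_inv, zc_zc, zc_zc]
      exact mul_mem (mul_mem (hb (n + 1)) (inv_mem (ha (n + 1)))) (ha n)
    · intro n
      have hop : op a ((L a)⁻¹ b) = b := by
        rw [← hL, show (L a) ((L a)⁻¹ b) = b from Equiv.apply_symm_apply _ _]
      have heq := he a ((L a)⁻¹ b)
      rw [hop] at heq
      have h2 : zc (L w) 1 (L ((L a)⁻¹ b) * (L z)⁻¹) =
          (L b * (L z)⁻¹) * (L a * (L z)⁻¹)⁻¹ * zc (L w) 1 (L a * (L z)⁻¹) := by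
        rw [heq]; group
      have h3 : zc (L w) n (L ((L a)⁻¹ b) * (L z)⁻¹) =
          zc (L w) (n - 1) (zc (L w) 1 (L ((L a)⁻¹ b) * (L z)⁻¹)) := by
        rw [zc_zc]
        have : n - 1 + 1 = n := by ring
        rw [this]
      rw [h3, h2, zc_mul, zc_mul, zc_inv, zc_zc]
      have hc1 : n - 1 + 1 = n := by ring
      rw [hc1]
      exact mul_mem (mul_mem (hb (n - 1)) (inv_mem (ha (n - 1)))) (ha n)
  -- D ≤ E
  have hDE : D ≤ E := by
    have hall : ∀ q : Q, q ∈ S := hgen S hXS hSclosed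
    rw [hD]
    refine (Subgroup.closure_le _).mpr ?_
    rintro h ⟨u, v, rfl⟩
    have h1 : L u * (L z)⁻¹ ∈ E := by
      have := hall u 0
      rwa [zc_zero] at this
    have h2 : L v * (L z)⁻¹ ∈ E := by
      have := hall v 0
      rwa [zc_zero] at this
    have h3 : L u * (L v)⁻¹ = (L u * (L z)⁻¹) * (L v * (L z)⁻¹)⁻¹ := by group
    rw [h3]
    exact mul_mem h1 (inv_mem h2)
  exact le_antisymm hDE hED
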